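/- Let A be a finite congruence-distributive algebra which is local (i.e., A has exactly one maximal congruence). Then A has the FCLP and the CBLP. -/

import Mathlib

/-! Universal-algebra framework: algebras over a signature, congruences,
factor congruences, lifting properties. -/

structure Signature where
  ops : Type
  arity : ops → ℕ

structure Alg (σ : Signature) where
  carrier : Type
  interp : ∀ f : σ.ops, (Fin (σ.arity f) → carrier) → carrier

namespace Alg

variable {σ : Signature}

/-- A congruence: an equivalence relation compatible with all operations. -/
def IsCon (A : Alg σ) (r : A.carrier → A.carrier → Prop) : Prop :=
  Equivalence r ∧
    ∀ (f : σ.ops) (x y : Fin (σ.arity f) → A.carrier),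
      (∀ i, r (x i) (y i)) → r (A.interp f x) (A.interp f y)

/-- The least congruence `Δ_A`. -/
def delta (A : Alg σ) : A.carrier → A.carrier → Prop := fun a b => a = b

/-- The greatest congruence `∇_A = A²`. -/
def nabla (A : Alg σ) : A.carrier → A.carrier → Prop := fun _ _ => True

/-- Meet (intersection) of congruences. -/
def conMeet (A : Alg σ) (r s : A.carrier → A.carrier → Prop) :
    A.carrier → A.carrier → Prop := fun a b => r a b ∧ s a b

/-- Join of congruences: the least congruence containing both. -/
def conJoin (A : Alg σ) (r s : A.carrier → A.carrier → Prop) :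
    A.carrier → A.carrier → Prop := fun a b =>
  ∀ t, A.IsCon t → (∀ x y, r x y → t x y) → (∀ x y, s x y → t x y) → t a b

/-- The congruence generated by a set of pairs. -/
def conGen (A : Alg σ) (X : Set (A.carrier × A.carrier)) :
    A.carrier → A.carrier → Prop := fun a b =>
  ∀ t, A.IsCon t → (∀ p ∈ X, t p.1 p.2) → t a b

/-- Composition of relations: `(a,b) ∈ comp r s` iff `(a,x) ∈ s` and `(x,b) ∈ r`
for some `x`. -/
def comp (A : Alg σ) (r s : A.carrier → A.carrier → Prop) :
    A.carrier → A.carrier → Prop := fun a b => ∃ x, s a x ∧ r x b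

/-- Factor congruences: congruences `φ` having a congruence `φ*` with
`φ ∨ φ* = ∇`, `φ ∩ φ* = Δ` and `φ ∘ φ* = φ* ∘ φ`. -/
def IsFC (A : Alg σ) (φ : A.carrier → A.carrier → Prop) : Prop :=
  A.IsCon φ ∧ ∃ ψ, A.IsCon ψ ∧ A.conJoin φ ψ = A.nabla ∧
    A.conMeet φ ψ = A.delta ∧ A.comp φ ψ = A.comp ψ φ

/-- Boolean congruences: complemented elements of the lattice `Con(A)`. -/
def IsBooleanCon (A : Alg σ) (φ : A.carrier → A.carrier → Prop) : Prop :=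
  A.IsCon φ ∧ ∃ ψ, A.IsCon ψ ∧ A.conJoin φ ψ = A.nabla ∧ A.conMeet φ ψ = A.delta

/-- `A` is congruence-distributive iff the lattice `Con(A)` is distributive. -/
def CongDistrib (A : Alg σ) : Prop :=
  ∀ r s t, A.IsCon r → A.IsCon s → A.IsCon t →
    A.conMeet r (A.conJoin s t) = A.conJoin (A.conMeet r s) (A.conMeet r t)

/-- `A` is congruence-permutable iff all congruences permute under composition. -/
def CongPermutable (A : Alg σ) : Prop :=
  ∀ r s, A.IsCon r → A.IsCon s → A.comp r s = A.comp s r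

/-- Arithmetical = congruence-distributive + congruence-permutable. -/
def Arithmetical (A : Alg σ) : Prop := A.CongDistrib ∧ A.CongPermutable

/-- The quotient algebra `A/θ`. -/
noncomputable def quotAlg (A : Alg σ) (θ : A.carrier → A.carrier → Prop) :
    Alg σ where
  carrier := Quot θ
  interp f x := Quot.mk θ (A.interp f fun i => (x i).out)

/-- The image `α/θ = {(a/θ, b/θ) : (a,b) ∈ α}` of a relation in the quotient. -/
def quotRel (A : Alg σ) (θ α : A.carrier → A.carrier → Prop) :
    Quot θ → Quot θ → Prop := fun x y =>
  ∃ a b, x = Quot.mk θ a ∧ y = Quot.mk θ b ∧ α a b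

/-- `θ` has the Factor Congruence Lifting Property: the Boolean morphism
`FC(θ) : FC(A) → FC(A/θ)`, `ψ ↦ (ψ ∨ θ)/θ`, is surjective. -/
def HasFCLP (A : Alg σ) (θ : A.carrier → A.carrier → Prop) : Prop :=
  ∀ γ, (A.quotAlg θ).IsFC γ →
    ∃ ψ, A.IsFC ψ ∧ A.quotRel θ (A.conJoin ψ θ) = γ

/-- `θ` has the Congruence Boolean Lifting Property: the Boolean morphism
`B(Con(A)) → B(Con(A/θ))`, `ψ ↦ (ψ ∨ θ)/θ`, is surjective. -/
def HasCBLP (A : Alg σ) (θ : A.carrier → A.carrier → Prop) : Prop :=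
  ∀ γ, (A.quotAlg θ).IsBooleanCon γ →
    ∃ ψ, A.IsBooleanCon ψ ∧ A.quotRel θ (A.conJoin ψ θ) = γ

/-- `A` has FCLP iff every congruence of `A` has FCLP. -/
def AlgFCLP (A : Alg σ) : Prop := ∀ θ, A.IsCon θ → A.HasFCLP θ

/-- `A` has CBLP iff every congruence of `A` has CBLP. -/
def AlgCBLP (A : Alg σ) : Prop := ∀ θ, A.IsCon θ → A.HasCBLP θ

/-- FC-normality. -/
def FCNormal (A : Alg σ) : Prop :=
  ∀ φ ψ, A.IsCon φ → A.IsCon ψ → A.comp φ ψ = A.nabla →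
    ∃ α β, A.IsFC α ∧ A.IsFC β ∧ A.conMeet α β = A.delta ∧
      A.comp φ α = A.nabla ∧ A.comp ψ β = A.nabla

/-- B-normality. -/
def BNormal (A : Alg σ) : Prop :=
  ∀ φ ψ, A.IsCon φ → A.IsCon ψ → A.conJoin φ ψ = A.nabla →
    ∃ α β, A.IsBooleanCon α ∧ A.IsBooleanCon β ∧ A.conMeet α β = A.delta ∧
      A.conJoin φ α = A.nabla ∧ A.conJoin ψ β = A.nabla

/-- Isomorphism of algebras. -/
def Iso (A B : Alg σ) : Prop :=
  ∃ e : A.carrier ≃ B.carrier,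
    ∀ (f : σ.ops) (x : Fin (σ.arity f) → A.carrier),
      e (A.interp f x) = B.interp f fun i => e (x i)

/-- Direct product of a finite family of algebras. -/
def prodAlg {n : ℕ} (B : Fin n → Alg σ) : Alg σ where
  carrier := ∀ i, (B i).carrier
  interp f x := fun i => (B i).interp f fun j => x j i

/-- The product congruence `θ₁ × … × θₙ`. -/
def prodRel {n : ℕ} (B : Fin n → Alg σ)
    (θ : ∀ i, (B i).carrier → (B i).carrier → Prop) :
    (prodAlg B).carrier → (prodAlg B).carrier → Prop :=
  fun x y => ∀ i, θ i (x i) (y i)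

/-- Maximal congruences: maximal elements of `(Con(A) \ {∇}, ⊆)`. -/
def IsMaxCon (A : Alg σ) (θ : A.carrier → A.carrier → Prop) : Prop :=
  A.IsCon θ ∧ θ ≠ A.nabla ∧
    ∀ ψ, A.IsCon ψ → ψ ≠ A.nabla → (∀ a b, θ a b → ψ a b) → ψ = θ

/-- Prime congruences. -/
def IsPrimeCon (A : Alg σ) (θ : A.carrier → A.carrier → Prop) : Prop :=
  A.IsCon θ ∧ ∀ α β, A.IsCon α → A.IsCon β →
    (∀ a b, α a b → β a b → θ a b) →
    (∀ a b, α a b → θ a b) ∨ ∀ a b, β a b → θ a b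

end Alg


namespace Alg

variable {σ : Signature}

lemma isCon_delta (A : Alg σ) : A.IsCon A.delta := by
  refine ⟨⟨fun a => rfl, fun h => h.symm, fun h1 h2 => h1.trans h2⟩, ?_⟩
  intro f x y h
  have : x = y := funext h
  rw [show A.delta (A.interp f x) (A.interp f y) = (A.interp f x = A.interp f y) from rfl, this]

lemma isCon_nabla (A : Alg σ) : A.IsCon A.nabla :=
  ⟨⟨fun _ => trivial, fun _ => trivial, fun _ _ => trivial⟩, fun _ _ _ _ => trivial⟩

lemma conJoin_nabla_left (A : Alg σ) (s : A.carrier → A.carrier → Prop) :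
    A.conJoin A.nabla s = A.nabla := by
  funext a b
  exact propext ⟨fun _ => trivial, fun _ t _ hr _ => hr a b trivial⟩

lemma conJoin_nabla_right (A : Alg σ) (r : A.carrier → A.carrier → Prop) :
    A.conJoin r A.nabla = A.nabla := by
  funext a b
  exact propext ⟨fun _ => trivial, fun _ t _ _ hs => hs a b trivial⟩

lemma conJoin_delta_left (A : Alg σ) {s : A.carrier → A.carrier → Prop} (hs : A.IsCon s) :
    A.conJoin A.delta s = s := by
  funext a b
  refine propext ⟨fun h => ?_, fun h t ht h1 h2 => h2 a b h⟩
  exact h s hs (fun x y hxy => hxy ▸ hs.1.refl x) (fun _ _ h => h)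

lemma isFC_nabla (A : Alg σ) : A.IsFC A.nabla := by
  refine ⟨A.isCon_nabla, A.delta, A.isCon_delta, A.conJoin_nabla_left _, ?_, ?_⟩
  · funext a b; exact propext ⟨fun h => h.2, fun h => ⟨trivial, h⟩⟩
  · funext a b
    exact propext ⟨fun _ => ⟨b, trivial, rfl⟩, fun _ => ⟨a, rfl, trivial⟩⟩

lemma isFC_delta (A : Alg σ) : A.IsFC A.delta := by
  refine ⟨A.isCon_delta, A.nabla, A.isCon_nabla, A.conJoin_nabla_right _, ?_, ?_⟩
  · funext a b; exact propext ⟨fun h => h.1, fun h => ⟨h, trivial⟩⟩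
  · funext a b
    exact propext ⟨fun _ => ⟨a, rfl, trivial⟩, fun _ => ⟨b, trivial, rfl⟩⟩

lemma isBool_nabla (A : Alg σ) : A.IsBooleanCon A.nabla := by
  obtain ⟨h1, ψ, h2, h3, h4, -⟩ := A.isFC_nabla
  exact ⟨h1, ψ, h2, h3, h4⟩

lemma isBool_delta (A : Alg σ) : A.IsBooleanCon A.delta := by
  obtain ⟨h1, ψ, h2, h3, h4, -⟩ := A.isFC_delta
  exact ⟨h1, ψ, h2, h3, h4⟩

/-- In a finite algebra, every proper congruence is below a maximal congruence. -/
lemma le_max_of_proper {A : Alg σ} (hfin : Finite A.carrier)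
    {μ : A.carrier → A.carrier → Prop} (hμ : A.IsMaxCon μ)
    (huniq : ∀ ν, A.IsMaxCon ν → ν = μ)
    {ψ : A.carrier → A.carrier → Prop} (hψ : A.IsCon ψ) (hpr : ψ ≠ A.nabla) :
    ∀ a b, ψ a b → μ a b := by
  classical
  let S : Set (A.carrier → A.carrier → Prop) :=
    {t | A.IsCon t ∧ t ≠ A.nabla ∧ ∀ a b, ψ a b → t a b}
  have hSfin : S.Finite := Set.toFinite S
  have hSne : S.Nonempty := ⟨ψ, hψ, hpr, fun _ _ h => h⟩
  obtain ⟨m, hmS, hmax⟩ := Set.Finite.exists_maximalFor id S hSfin hSne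
  have hm : A.IsMaxCon m := by
    refine ⟨hmS.1, hmS.2.1, fun χ hχ hχne hsub => ?_⟩
    have hχS : χ ∈ S := ⟨hχ, hχne, fun a b h => hsub a b (hmS.2.2 a b h)⟩
    have hle : m ≤ χ := fun a b h => hsub a b h
    exact le_antisymm (hmax hχS hle) hle
  have := huniq m hm
  intro a b h
  exact this ▸ hmS.2.2 a b h

/-- Key lemma: complemented congruences of a quotient of a finite local algebra
are trivial. -/
lemma key {A : Alg σ} (hfin : Finite A.carrier)
    (hloc : ∃! μ, A.IsMaxCon μ)
    {θ : A.carrier → A.carrier → Prop} (hθ : A.IsCon θ)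
    {γ δ : (A.quotAlg θ).carrier → (A.quotAlg θ).carrier → Prop}
    (hγ : (A.quotAlg θ).IsCon γ) (hδ : (A.quotAlg θ).IsCon δ)
    (hjoin : (A.quotAlg θ).conJoin γ δ = (A.quotAlg θ).nabla)
    (hmeet : (A.quotAlg θ).conMeet γ δ = (A.quotAlg θ).delta) :
    γ = (A.quotAlg θ).delta ∨ γ = (A.quotAlg θ).nabla := by
  classical
  obtain ⟨μ, hμ, huniq⟩ := hloc
  have mk_eq : ∀ a b : A.carrier, Quot.mk θ a = Quot.mk θ b ↔ θ a b := by
    intro a b; exact Quot.eq.trans hθ.1.eqvGen_iff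
  have out_rel : ∀ a : A.carrier, θ ((Quot.mk θ a).out) a := by
    intro a
    exact (mk_eq _ _).1 (Quot.out_eq (Quot.mk θ a))
  -- pullbacks
  set γ' : A.carrier → A.carrier → Prop := fun a b => γ (Quot.mk θ a) (Quot.mk θ b) with hγ'def
  set δ' : A.carrier → A.carrier → Prop := fun a b => δ (Quot.mk θ a) (Quot.mk θ b) with hδ'def
  -- mk commutes with interp up to equality of classes
  have hq : ∀ (f : σ.ops) (x : Fin (σ.arity f) → A.carrier),
      Quot.mk θ (A.interp f x) = (A.quotAlg θ).interp f (fun i => Quot.mk θ (x i)) := by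
    intro f x
    have : θ (A.interp f x) (A.interp f fun i => (Quot.mk θ (x i)).out) :=
      hθ.2 f _ _ (fun i => hθ.1.symm (out_rel (x i)))
    exact Quot.sound this
  have pullCon : ∀ (ρ : (A.quotAlg θ).carrier → (A.quotAlg θ).carrier → Prop),
      (A.quotAlg θ).IsCon ρ →
      A.IsCon (fun a b => ρ (Quot.mk θ a) (Quot.mk θ b)) := by
    intro ρ hρ
    refine ⟨⟨fun a => hρ.1.refl _, fun h => hρ.1.symm h, fun h1 h2 => hρ.1.trans h1 h2⟩, ?_⟩
    intro f x y h
    show ρ (Quot.mk θ (A.interp f x)) (Quot.mk θ (A.interp f y))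
    rw [hq f x, hq f y]
    exact hρ.2 f _ _ h
  have hγ'con : A.IsCon γ' := pullCon γ hγ
  have hδ'con : A.IsCon δ' := pullCon δ hδ
  have hγ'θ : ∀ a b, θ a b → γ' a b := by
    intro a b h
    show γ (Quot.mk θ a) (Quot.mk θ b)
    rw [Quot.sound h]
    exact hγ.1.refl _
  -- the join of the pullbacks is total
  have hjoin' : ∀ a b, A.conJoin γ' δ' a b := by
    intro a b t ht htγ htδ
    have htθ : ∀ x y, θ x y → t x y := fun x y h => htγ x y (hγ'θ x y h)
    -- pushforward of t
    set t' : (A.quotAlg θ).carrier → (A.quotAlg θ).carrier → Prop := A.quotRel θ t with ht'def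
    have ht'mk : ∀ x y : A.carrier, t' (Quot.mk θ x) (Quot.mk θ y) ↔ t x y := by
      intro x y
      constructor
      · rintro ⟨a, b, ha, hb, hab⟩
        have h1 : t x a := htθ x a ((mk_eq x a).1 ha)
        have h2 : t b y := htθ b y ((mk_eq b y).1 hb.symm)
        exact ht.1.trans h1 (ht.1.trans hab h2)
      · intro h; exact ⟨x, y, rfl, rfl, h⟩
    have ht'con : (A.quotAlg θ).IsCon t' := by
      constructor
      · constructor
        · intro x; exact ⟨x.out, x.out, (Quot.out_eq x).symm, (Quot.out_eq x).symm, ht.1.refl _⟩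
        · rintro x y ⟨a, b, ha, hb, hab⟩; exact ⟨b, a, hb, ha, ht.1.symm hab⟩
        · rintro x y z ⟨a, b, ha, hb, hab⟩ ⟨c, d, hc, hd, hcd⟩
          have : θ b c := (mk_eq b c).1 (hb.symm.trans hc)
          exact ⟨a, d, ha, hd, ht.1.trans hab (ht.1.trans (htθ _ _ this) hcd)⟩
      · intro f x y h
        have hxy : ∀ i, t ((x i).out) ((y i).out) := by
          intro i
          have := h i
          have h2 : t' (Quot.mk θ ((x i).out)) (Quot.mk θ ((y i).out)) := by
            rwa [Quot.out_eq (x i), Quot.out_eq (y i)]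
          exact (ht'mk _ _).1 h2
        exact ⟨_, _, rfl, rfl, ht.2 f _ _ hxy⟩
    have ht'γ : ∀ x y, γ x y → t' x y := by
      intro x y h
      have : γ' x.out y.out := by
        show γ (Quot.mk θ x.out) (Quot.mk θ y.out)
        rwa [Quot.out_eq x, Quot.out_eq y]
      exact ⟨x.out, y.out, (Quot.out_eq x).symm, (Quot.out_eq y).symm, htγ _ _ this⟩
    have ht'δ : ∀ x y, δ x y → t' x y := by
      intro x y h
      have : δ' x.out y.out := by
        show δ (Quot.mk θ x.out) (Quot.mk θ y.out)
        rwa [Quot.out_eq x, Quot.out_eq y]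
      exact ⟨x.out, y.out, (Quot.out_eq x).symm, (Quot.out_eq y).symm, htδ _ _ this⟩
    have hjab : (A.quotAlg θ).conJoin γ δ (Quot.mk θ a) (Quot.mk θ b) := by
      rw [hjoin]; trivial
    have := hjab t' ht'con ht'γ ht'δ
    exact (ht'mk a b).1 this
  -- one of the pullbacks is total
  have hcases : γ' = A.nabla ∨ δ' = A.nabla := by
    by_contra hc
    push_neg at hc
    have h1 := le_max_of_proper hfin hμ huniq hγ'con hc.1
    have h2 := le_max_of_proper hfin hμ huniq hδ'con hc.2
    have : μ = A.nabla := by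
      funext a b
      exact propext ⟨fun _ => trivial, fun _ => hjoin' a b μ hμ.1 h1 h2⟩
    exact hμ.2.1 this
  rcases hcases with h | h
  · right
    funext x y
    refine propext ⟨fun _ => trivial, fun _ => ?_⟩
    have : γ' x.out y.out := by rw [h]; trivial
    have : γ (Quot.mk θ x.out) (Quot.mk θ y.out) := this
    rwa [Quot.out_eq x, Quot.out_eq y] at this
  · left
    have hδnab : δ = (A.quotAlg θ).nabla := by
      funext x y
      refine propext ⟨fun _ => trivial, fun _ => ?_⟩
      have : δ' x.out y.out := by rw [h]; trivial
      have : δ (Quot.mk θ x.out) (Quot.mk θ y.out) := this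
      rwa [Quot.out_eq x, Quot.out_eq y] at this
    funext x y
    refine propext ⟨fun hxy => ?_, fun hxy => hxy ▸ hγ.1.refl x⟩
    have : (A.quotAlg θ).conMeet γ δ x y := ⟨hxy, by rw [hδnab]; trivial⟩
    rw [hmeet] at this
    exact this

lemma quotRel_self {A : Alg σ} {θ : A.carrier → A.carrier → Prop} (hθ : A.IsCon θ) :
    A.quotRel θ θ = (A.quotAlg θ).delta := by
  funext x y
  refine propext ⟨?_, ?_⟩
  · rintro ⟨a, b, rfl, rfl, hab⟩
    exact Quot.sound hab
  · intro h
    refine ⟨x.out, y.out, (Quot.out_eq x).symm, (Quot.out_eq y).symm, ?_⟩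
    have : Quot.mk θ x.out = Quot.mk θ y.out := by
      rw [Quot.out_eq, Quot.out_eq]; exact h
    exact (Quot.eq.trans hθ.1.eqvGen_iff).1 this

lemma quotRel_nabla {A : Alg σ} (θ : A.carrier → A.carrier → Prop) :
    A.quotRel θ A.nabla = (A.quotAlg θ).nabla := by
  funext x y
  exact propext ⟨fun _ => trivial,
    fun _ => ⟨x.out, y.out, (Quot.out_eq x).symm, (Quot.out_eq y).symm, trivial⟩⟩

end Alg

/-- A finite local congruence-distributive algebra has the FCLP and
the CBLP. -/
theorem stmt_18 {σ : Signature} (A : Alg σ) (hne : Nonempty A.carrier)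
    (hfin : Finite A.carrier) (hcd : A.CongDistrib)
    (hloc : ∃! μ, A.IsMaxCon μ) :
    A.AlgFCLP ∧ A.AlgCBLP := by
  have main : ∀ θ, A.IsCon θ → ∀ γ δ, (A.quotAlg θ).IsCon γ → (A.quotAlg θ).IsCon δ →
      (A.quotAlg θ).conJoin γ δ = (A.quotAlg θ).nabla →
      (A.quotAlg θ).conMeet γ δ = (A.quotAlg θ).delta →
      ∃ ψ, A.IsFC ψ ∧ A.IsBooleanCon ψ ∧ A.quotRel θ (A.conJoin ψ θ) = γ := by
    intro θ hθ γ δ hγ hδ hj hm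
    rcases Alg.key hfin hloc hθ hγ hδ hj hm with h | h
    · refine ⟨A.delta, A.isFC_delta, A.isBool_delta, ?_⟩
      rw [A.conJoin_delta_left hθ, Alg.quotRel_self hθ, h]
    · refine ⟨A.nabla, A.isFC_nabla, A.isBool_nabla, ?_⟩
      rw [A.conJoin_nabla_left θ, Alg.quotRel_nabla θ, h]
  obtain ⟨μ, hμ, huniq⟩ := hloc
  constructor
  · intro θ hθ γ hγFC
    obtain ⟨hγ, δ, hδ, hj, hm, -⟩ := hγFC
    obtain ⟨ψ, h1, h2, h3⟩ := main θ hθ γ δ hγ hδ hj hm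
    exact ⟨ψ, h1, h3⟩
  · intro θ hθ γ hγB
    obtain ⟨hγ, δ, hδ, hj, hm⟩ := hγB
    obtain ⟨ψ, h1, h2, h3⟩ := main θ hθ γ δ hγ hδ hj hm
    exact ⟨ψ, h2, h3⟩
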